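/- Let Q be an n×n real symmetric matrix with ‖Q‖₂ ≤ 1, let α ∈ (0,1), let d₁,…,d_n > 0 and w₁,…,w_n > 0 with D = diag(d), W = diag(w), w_max = max_i w_i, w_min = min_i w_i, and let v ∈ ℝⁿ. If δ₁ ≥ max_i |√(d_i/w_i) − 1| and δ₂ ≥ max_i |√(w_i/d_i) − 1|, then ‖ (1−α) ( D^{1/2}(I − αQ)^{-1}D^{-1/2} − W^{1/2}(I − αQ)^{-1}W^{-1/2} ) v ‖₂ ≤ ( (1+δ₁)δ₂ + δ₁ ) · √(w_max/w_min) · ‖v‖₂. -/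

import Mathlib

open Matrix Finset

/-- Spectral norm of a matrix: the operator norm induced by the Euclidean vector norm. -/
noncomputable def sNorm {n : ℕ} (M : Matrix (Fin n) (Fin n) ℝ) : ℝ :=
  ‖Matrix.toEuclideanCLM (𝕜 := ℝ) M‖

/-- Euclidean norm of a vector. -/
noncomputable def vNorm2 {n : ℕ} (x : Fin n → ℝ) : ℝ :=
  Real.sqrt (∑ i, (x i) ^ 2)

lemma vNorm2_eq {n : ℕ} (x : Fin n → ℝ) :
    vNorm2 x = ‖(WithLp.equiv 2 (Fin n → ℝ)).symm x‖ := by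
  rw [EuclideanSpace.norm_eq]
  simp [vNorm2, Real.norm_eq_abs, sq_abs]

lemma vNorm2_nonneg {n : ℕ} (x : Fin n → ℝ) : 0 ≤ vNorm2 x := Real.sqrt_nonneg _

lemma bridge {n : ℕ} (M : Matrix (Fin n) (Fin n) ℝ) (x : Fin n → ℝ) :
    Matrix.toEuclideanCLM (𝕜 := ℝ) M ((WithLp.equiv 2 (Fin n → ℝ)).symm x) =
      (WithLp.equiv 2 (Fin n → ℝ)).symm (M *ᵥ x) := by
  exact Matrix.toEuclideanCLM_toLp M x

lemma vNorm2_mulVec_le {n : ℕ} (M : Matrix (Fin n) (Fin n) ℝ) (x : Fin n → ℝ) :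
    vNorm2 (M *ᵥ x) ≤ sNorm M * vNorm2 x := by
  rw [vNorm2_eq, vNorm2_eq, ← bridge]
  exact (Matrix.toEuclideanCLM (𝕜 := ℝ) M).le_opNorm _

lemma sNorm_le_bound {n : ℕ} (M : Matrix (Fin n) (Fin n) ℝ) {c : ℝ} (h0 : 0 ≤ c)
    (h : ∀ x, vNorm2 (M *ᵥ x) ≤ c * vNorm2 x) : sNorm M ≤ c := by
  apply ContinuousLinearMap.opNorm_le_bound _ h0
  intro y
  have := h (WithLp.equiv 2 (Fin n → ℝ) y)
  rw [vNorm2_eq, vNorm2_eq] at this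
  rw [← bridge, Equiv.symm_apply_apply] at this
  exact this

lemma sNorm_mul_le {n : ℕ} (A B : Matrix (Fin n) (Fin n) ℝ) :
    sNorm (A * B) ≤ sNorm A * sNorm B := by
  rw [sNorm, _root_.map_mul]; exact norm_mul_le _ _

lemma sNorm_add_le {n : ℕ} (A B : Matrix (Fin n) (Fin n) ℝ) :
    sNorm (A + B) ≤ sNorm A + sNorm B := by
  rw [sNorm, _root_.map_add]; exact norm_add_le _ _

lemma sNorm_nonneg {n : ℕ} (A : Matrix (Fin n) (Fin n) ℝ) : 0 ≤ sNorm A := norm_nonneg _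

lemma vNorm2_add_le {n : ℕ} (x y : Fin n → ℝ) :
    vNorm2 (x + y) ≤ vNorm2 x + vNorm2 y := by
  rw [vNorm2_eq, vNorm2_eq, vNorm2_eq, show (WithLp.equiv 2 (Fin n → ℝ)).symm (x + y) = (WithLp.equiv 2 (Fin n → ℝ)).symm x + (WithLp.equiv 2 (Fin n → ℝ)).symm y from rfl]
  exact norm_add_le _ _

lemma vNorm2_smul {n : ℕ} (c : ℝ) (x : Fin n → ℝ) :
    vNorm2 (c • x) = |c| * vNorm2 x := by
  rw [vNorm2_eq, vNorm2_eq, show (WithLp.equiv 2 (Fin n → ℝ)).symm (c • x) = c • (WithLp.equiv 2 (Fin n → ℝ)).symm x from rfl, norm_smul, Real.norm_eq_abs]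

lemma sNorm_diagonal_le {n : ℕ} (f : Fin n → ℝ) {c : ℝ} (h0 : 0 ≤ c)
    (h : ∀ i, |f i| ≤ c) : sNorm (Matrix.diagonal f) ≤ c := by
  apply sNorm_le_bound _ h0
  intro x
  have key : ∀ i, (Matrix.diagonal f *ᵥ x) i ^ 2 ≤ c ^ 2 * x i ^ 2 := by
    intro i
    rw [Matrix.mulVec_diagonal, mul_pow]
    have h1 : (f i)^2 ≤ c^2 := by
      rw [← sq_abs (f i)]; exact pow_le_pow_left₀ (abs_nonneg _) (h i) 2
    exact mul_le_mul_of_nonneg_right h1 (sq_nonneg _)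
  calc vNorm2 (Matrix.diagonal f *ᵥ x) ≤ Real.sqrt (∑ i, c ^ 2 * x i ^ 2) := by
        apply Real.sqrt_le_sqrt; exact Finset.sum_le_sum fun i _ => key i
    _ = c * vNorm2 x := by
        rw [← Finset.mul_sum, Real.sqrt_mul (sq_nonneg c), Real.sqrt_sq h0, vNorm2]

set_option synthInstance.maxHeartbeats 1000000 in
set_option maxHeartbeats 1000000 in
lemma isUnit_one_sub_smul {n : ℕ} (Q : Matrix (Fin n) (Fin n) ℝ) (hQ1 : sNorm Q ≤ 1)
    {α : ℝ} (h0 : 0 < α) (h1 : α < 1) : IsUnit (1 - α • Q) := by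
  have hT : ‖α • Matrix.toEuclideanCLM (𝕜 := ℝ) Q‖ < 1 := by
    calc ‖α • Matrix.toEuclideanCLM (𝕜 := ℝ) Q‖ ≤ ‖α‖ * ‖Matrix.toEuclideanCLM (𝕜 := ℝ) Q‖ :=
          ContinuousLinearMap.opNorm_smul_le _ _
      _ = α * sNorm Q := by rw [Real.norm_eq_abs, abs_of_pos h0]; rfl
      _ < 1 := by nlinarith [sNorm_nonneg Q]
  have hu : IsUnit (1 - α • Matrix.toEuclideanCLM (𝕜 := ℝ) Q) := (Units.oneSub _ hT).isUnit
  have hmap : Matrix.toEuclideanCLM (𝕜 := ℝ) (1 - α • Q) =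
      1 - α • Matrix.toEuclideanCLM (𝕜 := ℝ) Q := by
    rw [map_sub, _root_.map_one, _root_.map_smul]
  have hu2 : IsUnit (Matrix.toEuclideanCLM (𝕜 := ℝ) (1 - α • Q)) := hmap ▸ hu
  have := hu2.map (Matrix.toEuclideanCLM (𝕜 := ℝ)).symm
  simpa using this

lemma resolvent_bound {n : ℕ} (Q : Matrix (Fin n) (Fin n) ℝ) (hQ1 : sNorm Q ≤ 1)
    {α : ℝ} (h0 : 0 < α) (h1 : α < 1) :
    sNorm ((1 - α) • (1 - α • Q)⁻¹) ≤ 1 := by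
  have hU := isUnit_one_sub_smul Q hQ1 h0 h1
  apply sNorm_le_bound _ zero_le_one
  intro y
  set z := (1 - α • Q)⁻¹ *ᵥ y with hzdef
  have hz : (1 - α • Q) *ᵥ z = y := by
    rw [hzdef, Matrix.mulVec_mulVec,
      Matrix.mul_nonsing_inv _ ((Matrix.isUnit_iff_isUnit_det _).mp hU), Matrix.one_mulVec]
  have hy : z = y + α • (Q *ᵥ z) := by
    rw [← hz, Matrix.sub_mulVec, Matrix.one_mulVec, Matrix.smul_mulVec]
    abel
  have h1' : vNorm2 z ≤ vNorm2 y + α * vNorm2 z := by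
    calc vNorm2 z = vNorm2 (y + α • (Q *ᵥ z)) := by rw [← hy]
      _ ≤ vNorm2 y + vNorm2 (α • (Q *ᵥ z)) := vNorm2_add_le _ _
      _ ≤ vNorm2 y + α * vNorm2 z := by
          rw [vNorm2_smul, abs_of_pos h0]
          have h2 := vNorm2_mulVec_le Q z
          have h3 : vNorm2 (Q *ᵥ z) ≤ vNorm2 z := by nlinarith [vNorm2_nonneg z]
          exact add_le_add_right (mul_le_mul_of_nonneg_left h3 h0.le) _
  rw [Matrix.smul_mulVec, vNorm2_smul,
    abs_of_pos (by linarith : (0:ℝ) < 1 - α), one_mul, ← hzdef]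
  nlinarith [vNorm2_nonneg z, vNorm2_nonneg y]


/-- for symmetric `Q` with `‖Q‖₂ ≤ 1`, `α ∈ (0,1)` and positive diagonal
scalings `D, W`, if `δ₁ ≥ max_i |√(d_i/w_i) − 1|` and `δ₂ ≥ max_i |√(w_i/d_i) − 1|`, then
`‖(1−α)(D^{1/2}(I−αQ)^{-1}D^{-1/2} − W^{1/2}(I−αQ)^{-1}W^{-1/2}) v‖₂
  ≤ ((1+δ₁)δ₂ + δ₁)·√(w_max/w_min)·‖v‖₂`. -/
theorem diagonal_conjugation_resolvent_bound
    (n : ℕ) [NeZero n]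
    (Q : Matrix (Fin n) (Fin n) ℝ) (hQsymm : Q.IsSymm) (hQ1 : sNorm Q ≤ 1)
    (α : ℝ) (hα : α ∈ Set.Ioo (0 : ℝ) 1)
    (d w : Fin n → ℝ) (hd : ∀ i, 0 < d i) (hw : ∀ i, 0 < w i)
    (v : Fin n → ℝ)
    (δ₁ δ₂ : ℝ)
    (hδ₁ : ∀ i, |Real.sqrt (d i / w i) - 1| ≤ δ₁)
    (hδ₂ : ∀ i, |Real.sqrt (w i / d i) - 1| ≤ δ₂) :
    vNorm2 ((1 - α) • ((Matrix.diagonal (fun i => Real.sqrt (d i)) * (1 - α • Q)⁻¹ *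
          Matrix.diagonal (fun i => (Real.sqrt (d i))⁻¹) -
        Matrix.diagonal (fun i => Real.sqrt (w i)) * (1 - α • Q)⁻¹ *
          Matrix.diagonal (fun i => (Real.sqrt (w i))⁻¹)) *ᵥ v)) ≤
      ((1 + δ₁) * δ₂ + δ₁) *
        Real.sqrt (univ.sup' univ_nonempty w / univ.inf' univ_nonempty w) *
        vNorm2 v := by
  obtain ⟨h0, h1⟩ := hα
  have i0 : Fin n := ⟨0, Nat.pos_of_ne_zero (NeZero.ne n)⟩
  have hδ₁0 : 0 ≤ δ₁ := le_trans (abs_nonneg _) (hδ₁ i0)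
  have hδ₂0 : 0 ≤ δ₂ := le_trans (abs_nonneg _) (hδ₂ i0)
  set R : Matrix (Fin n) (Fin n) ℝ := (1 - α • Q)⁻¹ with hR
  set R' : Matrix (Fin n) (Fin n) ℝ := (1 - α) • R with hR'
  set S : Matrix (Fin n) (Fin n) ℝ := Matrix.diagonal (fun i => Real.sqrt (d i / w i)) with hS
  set T : Matrix (Fin n) (Fin n) ℝ := Matrix.diagonal (fun i => Real.sqrt (w i / d i)) with hT
  set Wh : Matrix (Fin n) (Fin n) ℝ := Matrix.diagonal (fun i => Real.sqrt (w i)) with hWh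
  set Wh' : Matrix (Fin n) (Fin n) ℝ := Matrix.diagonal (fun i => (Real.sqrt (w i))⁻¹) with hWh'
  have hswne : ∀ i, Real.sqrt (w i) ≠ 0 := fun i => (Real.sqrt_pos.mpr (hw i)).ne'
  have hsdne : ∀ i, Real.sqrt (d i) ≠ 0 := fun i => (Real.sqrt_pos.mpr (hd i)).ne'
  have hfact1 : Matrix.diagonal (fun i => Real.sqrt (d i)) = Wh * S := by
    rw [hWh, hS, Matrix.diagonal_mul_diagonal]
    refine congrArg Matrix.diagonal (funext fun i => ?_)
    rw [Real.sqrt_div (hd i).le]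
    field_simp
    rw [mul_div_assoc, mul_comm, div_self (hswne i), one_mul]
  have hfact2 : Matrix.diagonal (fun i => (Real.sqrt (d i))⁻¹) = T * Wh' := by
    rw [hWh', hT, Matrix.diagonal_mul_diagonal]
    refine congrArg Matrix.diagonal (funext fun i => ?_)
    rw [Real.sqrt_div (hw i).le]
    field_simp
    rw [mul_comm, ← div_div, div_self (hswne i)]
  have hM : (1 - α) • ((Matrix.diagonal (fun i => Real.sqrt (d i)) * R *
          Matrix.diagonal (fun i => (Real.sqrt (d i))⁻¹)) - Wh * R * Wh') =
      Wh * ((S - 1) * R' + S * R' * (T - 1)) * Wh' := by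
    rw [hfact1, hfact2, hR']
    simp only [Matrix.mul_smul, Matrix.smul_mul, smul_sub, smul_add, Matrix.sub_mul,
      Matrix.mul_sub, Matrix.add_mul, Matrix.mul_add, Matrix.one_mul, Matrix.mul_one,
      Matrix.mul_assoc]
    abel
  -- norm bounds
  have hR1 : sNorm R' ≤ 1 := resolvent_bound Q hQ1 h0 h1
  have hS1 : sNorm (S - 1) ≤ δ₁ := by
    rw [hS, ← Matrix.diagonal_one, Matrix.diagonal_sub]
    exact sNorm_diagonal_le _ hδ₁0 (fun i => by simpa using hδ₁ i)
  have hT1 : sNorm (T - 1) ≤ δ₂ := by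
    rw [hT, ← Matrix.diagonal_one, Matrix.diagonal_sub]
    exact sNorm_diagonal_le _ hδ₂0 (fun i => by simpa using hδ₂ i)
  have hSb : sNorm S ≤ 1 + δ₁ := by
    rw [hS]
    refine sNorm_diagonal_le _ (by linarith) (fun i => ?_)
    have := hδ₁ i
    have habs : |Real.sqrt (d i / w i)| ≤ |Real.sqrt (d i / w i) - 1| + 1 := by
      have := abs_sub_abs_le_abs_sub (Real.sqrt (d i / w i)) 1
      simp only [abs_one] at this
      linarith [abs_nonneg (Real.sqrt (d i / w i))]
    linarith
  set wmax := univ.sup' univ_nonempty w with hwmax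
  set wmin := univ.inf' univ_nonempty w with hwmin
  have hwmin_pos : 0 < wmin := by
    rw [hwmin, Finset.lt_inf'_iff]
    exact fun i _ => hw i
  have hwmax_pos : 0 < wmax := lt_of_lt_of_le hwmin_pos
    (le_trans (Finset.inf'_le w (mem_univ i0)) (Finset.le_sup' w (mem_univ i0)))
  have hWhb : sNorm Wh ≤ Real.sqrt wmax := by
    refine sNorm_diagonal_le _ (Real.sqrt_nonneg _) (fun i => ?_)
    rw [abs_of_nonneg (Real.sqrt_nonneg _)]
    exact Real.sqrt_le_sqrt (Finset.le_sup' w (mem_univ i))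
  have hWh'b : sNorm Wh' ≤ (Real.sqrt wmin)⁻¹ := by
    refine sNorm_diagonal_le _ (inv_nonneg.mpr (Real.sqrt_nonneg _)) (fun i => ?_)
    rw [abs_of_nonneg (inv_nonneg.mpr (Real.sqrt_nonneg _))]
    exact inv_anti₀ (Real.sqrt_pos.mpr hwmin_pos)
      (Real.sqrt_le_sqrt (Finset.inf'_le w (mem_univ i)))
  have hmid : sNorm ((S - 1) * R' + S * R' * (T - 1)) ≤ δ₁ + (1 + δ₁) * δ₂ := by
    have h1' : sNorm ((S - 1) * R') ≤ δ₁ := by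
      calc sNorm ((S - 1) * R') ≤ sNorm (S - 1) * sNorm R' := sNorm_mul_le _ _
        _ ≤ δ₁ * 1 := mul_le_mul hS1 hR1 (sNorm_nonneg _) hδ₁0
        _ = δ₁ := mul_one _
    have h2' : sNorm (S * R' * (T - 1)) ≤ (1 + δ₁) * δ₂ := by
      calc sNorm (S * R' * (T - 1)) ≤ sNorm (S * R') * sNorm (T - 1) := sNorm_mul_le _ _
        _ ≤ (sNorm S * sNorm R') * δ₂ := by
            refine mul_le_mul_of_nonneg_left hT1 ?_ |>.trans ?_
            · exact sNorm_nonneg _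
            · exact mul_le_mul_of_nonneg_right (sNorm_mul_le _ _) hδ₂0
        _ ≤ ((1 + δ₁) * 1) * δ₂ := by
            refine mul_le_mul_of_nonneg_right ?_ hδ₂0
            exact mul_le_mul hSb hR1 (sNorm_nonneg _) (by linarith)
        _ = (1 + δ₁) * δ₂ := by ring
    calc sNorm ((S - 1) * R' + S * R' * (T - 1)) ≤
        sNorm ((S - 1) * R') + sNorm (S * R' * (T - 1)) := sNorm_add_le _ _
      _ ≤ δ₁ + (1 + δ₁) * δ₂ := add_le_add h1' h2'
  have hmid0 : (0:ℝ) ≤ δ₁ + (1 + δ₁) * δ₂ := by positivity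
  have hfull : sNorm (Wh * ((S - 1) * R' + S * R' * (T - 1)) * Wh') ≤
      Real.sqrt wmax * (δ₁ + (1 + δ₁) * δ₂) * (Real.sqrt wmin)⁻¹ := by
    calc sNorm (Wh * ((S - 1) * R' + S * R' * (T - 1)) * Wh')
        ≤ sNorm (Wh * ((S - 1) * R' + S * R' * (T - 1))) * sNorm Wh' := sNorm_mul_le _ _
      _ ≤ (sNorm Wh * sNorm ((S - 1) * R' + S * R' * (T - 1))) * sNorm Wh' :=
          mul_le_mul_of_nonneg_right (sNorm_mul_le _ _) (sNorm_nonneg _)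
      _ ≤ (Real.sqrt wmax * (δ₁ + (1 + δ₁) * δ₂)) * (Real.sqrt wmin)⁻¹ := by
          refine mul_le_mul ?_ hWh'b (sNorm_nonneg _) (by positivity)
          exact mul_le_mul hWhb hmid (sNorm_nonneg _) (Real.sqrt_nonneg _)
      _ = Real.sqrt wmax * (δ₁ + (1 + δ₁) * δ₂) * (Real.sqrt wmin)⁻¹ := by ring
  have hkey : vNorm2 ((1 - α) • ((Matrix.diagonal (fun i => Real.sqrt (d i)) * R *
          Matrix.diagonal (fun i => (Real.sqrt (d i))⁻¹) - Wh * R * Wh') *ᵥ v)) ≤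
      (Real.sqrt wmax * (δ₁ + (1 + δ₁) * δ₂) * (Real.sqrt wmin)⁻¹) * vNorm2 v := by
    rw [← Matrix.smul_mulVec, hM]
    exact (vNorm2_mulVec_le _ v).trans
      (mul_le_mul_of_nonneg_right hfull (vNorm2_nonneg v))
  have hconst : Real.sqrt wmax * (δ₁ + (1 + δ₁) * δ₂) * (Real.sqrt wmin)⁻¹ =
      ((1 + δ₁) * δ₂ + δ₁) * Real.sqrt (wmax / wmin) := by
    rw [Real.sqrt_div hwmax_pos.le]
    field_simp
    ring
  calc vNorm2 _ ≤ _ := hkey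
    _ = ((1 + δ₁) * δ₂ + δ₁) * Real.sqrt (wmax / wmin) * vNorm2 v := by rw [hconst]
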